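/- Let n ≥ 1 and let P_n be the metric space on points {1,…,n} with d(i,j) = |i−j|. Let T be an ultrametric space and f : T → P_n a map satisfying d_T(u,v) ≥ |f(u) − f(v)| for all u,v ∈ T (a non-contractive multi-embedding). Then for every choice of points u'_1,…,u'_n ∈ T with f(u'_i) = i for each i, the length Σ_{i=1}^{n−1} d_T(u'_i, u'_{i+1}) is at least (n/2)·log₂ n. -/

import Mathlib

/-- An ultrametric space: the distance satisfies the strong triangle inequality. -/
def IsUltrametricSpace (X : Type*) [MetricSpace X] : Prop :=
  ∀ x y z : X, dist x z ≤ max (dist x y) (dist y z)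

lemma ultra_chain {T : Type*} [MetricSpace T] (hT : IsUltrametricSpace T) (v : ℕ → T) :
    ∀ a b : ℕ, a < b → ∃ k, a ≤ k ∧ k < b ∧ dist (v a) (v b) ≤ dist (v k) (v (k + 1)) := by
  intro a b
  induction b with
  | zero => omega
  | succ b ih =>
    intro hab
    rcases eq_or_lt_of_le (Nat.lt_succ_iff.mp hab) with h | h
    · exact ⟨a, le_refl a, by omega, by rw [h]⟩
    · obtain ⟨k, hk1, hk2, hk3⟩ := ih h
      rcases le_max_iff.mp (hT (v a) (v b) (v (b + 1))) with h' | h'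
      · exact ⟨k, hk1, by omega, h'.trans hk3⟩
      · exact ⟨b, by omega, by omega, h'⟩

lemma real_key {x y : ℝ} (hx : 1 ≤ x) (hy : 1 ≤ y) :
    (x + y) / 2 * Real.logb 2 (x + y) ≤
      x / 2 * Real.logb 2 x + (x + y - 1) + y / 2 * Real.logb 2 y := by
  have hx0 : (0:ℝ) ≤ x := by linarith
  have hy0 : (0:ℝ) ≤ y := by linarith
  have hconv := Real.convexOn_mul_log.2 (Set.mem_Ici.mpr hx0) (Set.mem_Ici.mpr hy0)
      (by norm_num : (0:ℝ) ≤ 1/2) (by norm_num : (0:ℝ) ≤ 1/2) (by norm_num)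
  have hlog2 : (0:ℝ) < Real.log 2 := Real.log_pos (by norm_num)
  simp only [smul_eq_mul] at hconv
  rw [show 1/2 * x + 1/2 * y = (x + y)/2 from by ring,
    Real.log_div (by positivity) (by norm_num)] at hconv
  have e : ∀ t : ℝ, Real.logb 2 t = Real.log t / Real.log 2 := fun t => rfl
  have main : (x + y) / 2 * Real.log (x + y) ≤
      x / 2 * Real.log x + (x + y - 1) * Real.log 2 + y / 2 * Real.log y := by
    nlinarith [hconv, mul_nonneg (by linarith : (0:ℝ) ≤ (x + y) / 2 - 1) hlog2.le]
  calc (x + y) / 2 * Real.logb 2 (x + y)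
      = ((x + y) / 2 * Real.log (x + y)) / Real.log 2 := by rw [e]; ring
    _ ≤ (x / 2 * Real.log x + (x + y - 1) * Real.log 2 + y / 2 * Real.log y) / Real.log 2 := by
        gcongr
    _ = x / 2 * Real.logb 2 x + (x + y - 1) + y / 2 * Real.logb 2 y := by
        rw [e, e]; field_simp

lemma main_aux {T : Type*} [MetricSpace T] (hT : IsUltrametricSpace T)
    (n : ℕ) (v : ℕ → T)
    (hdist : ∀ i j : ℕ, i ≤ j → j < n → (j : ℝ) - (i : ℝ) ≤ dist (v i) (v j)) :
    ∀ m a b : ℕ, b - a ≤ m → a ≤ b → b < n →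
      ((b - a + 1 : ℕ) : ℝ) / 2 * Real.logb 2 ((b - a + 1 : ℕ) : ℝ) ≤
        ∑ i ∈ Finset.Ico a b, dist (v i) (v (i + 1)) := by
  intro m
  induction m with
  | zero =>
    intro a b h1 h2 _
    have : a = b := by omega
    subst this
    simp
  | succ m ih =>
    intro a b h1 h2 hbn
    rcases eq_or_lt_of_le h2 with h | h
    · subst h; simp
    · obtain ⟨k, hk1, hk2, hk3⟩ := ultra_chain hT v a b h
      have hd : ((b : ℝ) - a) ≤ dist (v k) (v (k + 1)) :=
        le_trans (hdist a b h2 hbn) hk3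
      have hL := ih a k (by omega) hk1 (by omega)
      have hR := ih (k + 1) b (by omega) (by omega) hbn
      have hsplit : ∑ i ∈ Finset.Ico a b, dist (v i) (v (i + 1)) =
          (∑ i ∈ Finset.Ico a k, dist (v i) (v (i + 1))) + dist (v k) (v (k + 1)) +
          (∑ i ∈ Finset.Ico (k + 1) b, dist (v i) (v (i + 1))) := by
        rw [← Finset.sum_Ico_consecutive _ hk1 (le_of_lt hk2),
          Finset.sum_eq_sum_Ico_succ_bot hk2]
        ring
      rw [hsplit]
      have key := real_key (x := ((k - a + 1 : ℕ) : ℝ)) (y := ((b - k : ℕ) : ℝ))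
        (by exact_mod_cast Nat.one_le_iff_ne_zero.mpr (by omega))
        (by exact_mod_cast Nat.one_le_iff_ne_zero.mpr (by omega))
      have hXY : ((b - a + 1 : ℕ) : ℝ) = ((k - a + 1 : ℕ) : ℝ) + ((b - k : ℕ) : ℝ) := by
        have : (b - a + 1 : ℕ) = (k - a + 1) + (b - k) := by omega
        exact_mod_cast congrArg (Nat.cast : ℕ → ℝ) this
      have hba : ((b - a + 1 : ℕ) : ℝ) = (b : ℝ) - a + 1 := by
        rw [Nat.cast_add, Nat.cast_sub h2]; norm_num
      have heq : b - (k + 1) + 1 = b - k := by omega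
      rw [heq] at hR
      rw [hXY]
      linarith [key, hL, hR, hd, hXY, hba]

/-- Proposition 10 (core estimate): if `T` is an ultrametric space and `f : T → {1,…,n}`
is non-contractive for the path metric `d(i,j) = |i - j|`, then every choice of
representatives `u'_1,…,u'_n` with `f(u'_i) = i` traces a path in `T` of length at least
`(n/2)·log₂ n`. -/
theorem path_lift_in_ultrametric_long
    (n : ℕ) (hn : 1 ≤ n) (T : Type*) [MetricSpace T] (hT : IsUltrametricSpace T)
    (f : T → Fin n)
    (hnc : ∀ u v : T, |(((f u : ℕ) : ℝ)) - (((f v : ℕ) : ℝ))| ≤ dist u v)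
    (u' : Fin n → T) (hu' : ∀ i : Fin n, f (u' i) = i) :
    (n : ℝ) / 2 * Real.logb 2 n ≤
      ∑ i : Fin (n - 1),
        dist (u' ⟨(i : ℕ), by omega⟩) (u' ⟨(i : ℕ) + 1, by omega⟩) := by
  set v : ℕ → T := fun i => u' ⟨min i (n - 1), by omega⟩ with hv
  have hdist : ∀ i j : ℕ, i ≤ j → j < n → (j : ℝ) - (i : ℝ) ≤ dist (v i) (v j) := by
    intro i j hij hjn
    have h1 := hnc (v j) (v i)
    have e1 : f (v j) = ⟨min j (n - 1), by omega⟩ := hu' _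
    have e2 : f (v i) = ⟨min i (n - 1), by omega⟩ := hu' _
    rw [e1, e2] at h1
    simp only [Fin.val_mk] at h1
    have m1 : min j (n - 1) = j := by omega
    have m2 : min i (n - 1) = i := by omega
    rw [m1, m2] at h1
    calc (j : ℝ) - i ≤ |(j : ℝ) - i| := le_abs_self _
      _ ≤ dist (v j) (v i) := h1
      _ = dist (v i) (v j) := dist_comm _ _
  have main := main_aux hT n v hdist n 0 (n - 1) (by omega) (by omega) (by omega)
  have hcast : ((n - 1 - 0 + 1 : ℕ) : ℝ) = (n : ℝ) := by
    have : (n - 1 - 0 + 1 : ℕ) = n := by omega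
    exact_mod_cast congrArg (Nat.cast : ℕ → ℝ) this
  rw [hcast] at main
  refine le_trans main (le_of_eq ?_)
  rw [show Finset.Ico 0 (n - 1) = Finset.range (n - 1) from (Finset.range_eq_Ico (n - 1)).symm,
    ← Fin.sum_univ_eq_sum_range (fun i => dist (v i) (v (i + 1))) (n - 1)]
  apply Finset.sum_congr rfl
  intro i _
  have hi : (i : ℕ) < n - 1 := i.isLt
  have e1 : v (i : ℕ) = u' ⟨(i : ℕ), by omega⟩ :=
    congrArg u' (Fin.ext (show min (i : ℕ) (n - 1) = (i : ℕ) by omega))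
  have e2 : v ((i : ℕ) + 1) = u' ⟨(i : ℕ) + 1, by omega⟩ :=
    congrArg u' (Fin.ext (show min ((i : ℕ) + 1) (n - 1) = (i : ℕ) + 1 by omega))
  rw [e1, e2]
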